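/- If P ⊆ ℝ² is a set of points, not all collinear, such that every triple of distinct points in P determines only the single angle value π/3 (i.e., A(P) = 1 with the only angle π/3), then #P ≤ 3. Equivalently, P(1) = 3: the largest non-collinear planar point set determining at most one distinct angle in (0,π) has exactly 3 points, achieved by the equilateral triangle. -/

import Mathlib

open EuclideanGeometry RealInnerProductSpace

noncomputable section

abbrev Pt : Type := EuclideanSpace ℝ (Fin 2)

/-- The point (x, y) in the Euclidean plane. -/
def pt (x y : ℝ) : Pt := (WithLp.equiv 2 (Fin 2 → ℝ)).symm ![x, y]

/-- The set of distinct angle values in (0, π) determined by a planar point set. -/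
def angleSet (P : Set Pt) : Set ℝ :=
  {θ : ℝ | θ ∈ Set.Ioo 0 Real.pi ∧
    ∃ x ∈ P, ∃ y ∈ P, ∃ z ∈ P, x ≠ y ∧ y ≠ z ∧ x ≠ z ∧ ∠ x y z = θ}

lemma inner_pt (x1 y1 x2 y2 : ℝ) : (inner ℝ (pt x1 y1 : Pt) (pt x2 y2)) = x1*x2 + y1*y2 := by
  simp [pt, PiLp.inner_apply, Fin.sum_univ_two, WithLp.equiv_symm_apply, PiLp.toLp_apply]; ring

lemma norm_pt (x y : ℝ) : ‖(pt x y : Pt)‖ = Real.sqrt (x^2 + y^2) := by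
  simp [pt, EuclideanSpace.norm_eq, Fin.sum_univ_two, WithLp.equiv_symm_apply, PiLp.toLp_apply, sq_abs]

lemma sub_pt (x1 y1 x2 y2 : ℝ) : (pt x1 y1 : Pt) - pt x2 y2 = pt (x1-x2) (y1-y2) := by
  simp [pt]
  ext i
  fin_cases i <;> simp [WithLp.equiv_symm_apply, PiLp.toLp_apply]

lemma no_three_rays (u v w : Pt) (hu : u ≠ 0) (hv : v ≠ 0) (hw : w ≠ 0)
    (h1 : InnerProductGeometry.angle u v = Real.pi / 3)
    (h2 : InnerProductGeometry.angle u w = Real.pi / 3)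
    (h3 : InnerProductGeometry.angle v w = Real.pi / 3) : False := by
  have hpu : (0:ℝ) < ‖u‖ := norm_pos_iff.2 hu
  have hpv : (0:ℝ) < ‖v‖ := norm_pos_iff.2 hv
  have hpw : (0:ℝ) < ‖w‖ := norm_pos_iff.2 hw
  have key : ∀ a b : Pt, a ≠ 0 → b ≠ 0 → InnerProductGeometry.angle a b = Real.pi / 3 →
      (inner ℝ a b) = ‖a‖ * ‖b‖ / 2 := by
    intro a b ha hb hab
    have := InnerProductGeometry.cos_angle a b
    rw [hab, Real.cos_pi_div_three] at this
    have hna : (0:ℝ) < ‖a‖ := norm_pos_iff.2 ha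
    have hnb : (0:ℝ) < ‖b‖ := norm_pos_iff.2 hb
    rw [eq_comm, div_eq_iff (by positivity)] at this
    linarith
  have huv := key u v hu hv h1
  have huw := key u w hu hw h2
  have hvw := key v w hv hw h3
  have hli : LinearIndependent ℝ ![u, v, w] := by
    rw [Fintype.linearIndependent_iff]
    intro g hg
    rw [Fin.sum_univ_three] at hg
    simp only [Matrix.cons_val_zero, Matrix.cons_val_one, Matrix.head_cons,
      Matrix.cons_val_two, Matrix.tail_cons] at hg
    have e1 : (inner ℝ (g 0 • u + g 1 • v + g 2 • w) u) = 0 := by rw [hg]; simp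
    have e2 : (inner ℝ (g 0 • u + g 1 • v + g 2 • w) v) = 0 := by rw [hg]; simp
    have e3 : (inner ℝ (g 0 • u + g 1 • v + g 2 • w) w) = 0 := by rw [hg]; simp
    simp only [inner_add_left, real_inner_smul_left, real_inner_self_eq_norm_sq] at e1 e2 e3
    have hvu : (inner ℝ v u) = ‖u‖ * ‖v‖ / 2 := by rw [real_inner_comm]; exact huv
    have hwu : (inner ℝ w u) = ‖u‖ * ‖w‖ / 2 := by rw [real_inner_comm]; exact huw
    have hwv : (inner ℝ w v) = ‖v‖ * ‖w‖ / 2 := by rw [real_inner_comm]; exact hvw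
    rw [hvu, hwu] at e1
    rw [huv, hwv] at e2
    rw [huw, hvw] at e3
    -- scaled variables
    set x := g 0 * ‖u‖ with hx
    set y := g 1 * ‖v‖ with hy
    set z := g 2 * ‖w‖ with hz
    have f1 : x + y / 2 + z / 2 = 0 := by
      apply mul_left_cancel₀ (ne_of_gt hpu)
      linear_combination e1
    have f2 : x / 2 + y + z / 2 = 0 := by
      apply mul_left_cancel₀ (ne_of_gt hpv)
      linear_combination e2
    have f3 : x / 2 + y / 2 + z = 0 := by
      apply mul_left_cancel₀ (ne_of_gt hpw)
      linear_combination e3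
    have hx0 : x = 0 := by linarith
    have hy0 : y = 0 := by linarith
    have hz0 : z = 0 := by linarith
    intro i
    fin_cases i
    · exact (mul_eq_zero.1 hx0).resolve_right (ne_of_gt hpu)
    · exact (mul_eq_zero.1 hy0).resolve_right (ne_of_gt hpv)
    · exact (mul_eq_zero.1 hz0).resolve_right (ne_of_gt hpw)
  have := hli.fintype_card_le_finrank
  rw [finrank_euclideanSpace_fin] at this
  simp at this

lemma pt_apply0 (x y : ℝ) : (pt x y) 0 = x := rfl
lemma pt_apply1 (x y : ℝ) : (pt x y) 1 = y := rfl

lemma arccos_half : Real.arccos (1/2) = Real.pi / 3 := by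
  rw [← Real.cos_pi_div_three, Real.arccos_cos (by positivity) (by linarith [Real.pi_pos])]

lemma angle_pt (x1 y1 x2 y2 x3 y3 : ℝ) :
    ∠ (pt x1 y1) (pt x2 y2) (pt x3 y3) =
      Real.arccos (((x1-x2)*(x3-x2)+(y1-y2)*(y3-y2)) /
        (Real.sqrt ((x1-x2)^2+(y1-y2)^2) * Real.sqrt ((x3-x2)^2+(y3-y2)^2))) := by
  unfold EuclideanGeometry.angle InnerProductGeometry.angle
  rw [show (pt x1 y1 -ᵥ pt x2 y2 : Pt) = pt (x1-x2) (y1-y2) from sub_pt _ _ _ _,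
    show (pt x3 y3 -ᵥ pt x2 y2 : Pt) = pt (x3-x2) (y3-y2) from sub_pt _ _ _ _,
    inner_pt, norm_pt, norm_pt]

lemma sqrt3_sq : Real.sqrt 3 ^ 2 = 3 := Real.sq_sqrt (by norm_num)

lemma hAB : (pt 0 0 : Pt) ≠ pt 1 0 := fun h => by
  have := congrArg (fun q : Pt => q 0) h; rw [pt_apply0, pt_apply0] at this; norm_num at this

lemma hAC : (pt 0 0 : Pt) ≠ pt (1/2) (Real.sqrt 3 / 2) := fun h => by
  have := congrArg (fun q : Pt => q 0) h; rw [pt_apply0, pt_apply0] at this; norm_num at this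

lemma hBC : (pt 1 0 : Pt) ≠ pt (1/2) (Real.sqrt 3 / 2) := fun h => by
  have := congrArg (fun q : Pt => q 0) h; rw [pt_apply0, pt_apply0] at this; norm_num at this

lemma hBAC : ∠ (pt 1 0 : Pt) (pt 0 0) (pt (1/2) (Real.sqrt 3 / 2)) = Real.pi / 3 := by
  rw [angle_pt]
  have h1 : ((1:ℝ)-0)^2+((0:ℝ)-0)^2 = 1 := by norm_num
  have h2 : ((1/2:ℝ)-0)^2+(Real.sqrt 3 / 2-0)^2 = 1 := by
    have := sqrt3_sq; nlinarith
  rw [h1, h2, Real.sqrt_one]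
  norm_num [arccos_half]

lemma hABC : ∠ (pt 0 0 : Pt) (pt 1 0) (pt (1/2) (Real.sqrt 3 / 2)) = Real.pi / 3 := by
  rw [angle_pt]
  have h1 : ((0:ℝ)-1)^2+((0:ℝ)-0)^2 = 1 := by norm_num
  have h2 : ((1/2:ℝ)-1)^2+(Real.sqrt 3 / 2-0)^2 = 1 := by
    have := sqrt3_sq; nlinarith
  rw [h1, h2, Real.sqrt_one]
  norm_num [arccos_half]

lemma hACB : ∠ (pt 0 0 : Pt) (pt (1/2) (Real.sqrt 3 / 2)) (pt 1 0) = Real.pi / 3 := by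
  rw [angle_pt]
  have h1 : ((0:ℝ)-1/2)^2+((0:ℝ)-Real.sqrt 3 / 2)^2 = 1 := by
    have := sqrt3_sq; nlinarith
  have h2 : ((1:ℝ)-1/2)^2+((0:ℝ)-Real.sqrt 3 / 2)^2 = 1 := by
    have := sqrt3_sq; nlinarith
  rw [h1, h2, Real.sqrt_one]
  have h3 : ((0:ℝ)-1/2)*((1:ℝ)-1/2)+((0:ℝ)-Real.sqrt 3 / 2)*((0:ℝ)-Real.sqrt 3 / 2) = 1/2 := by
    have := sqrt3_sq; nlinarith
  rw [h3]
  norm_num [arccos_half]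

lemma hCAB : ∠ (pt (1/2) (Real.sqrt 3 / 2) : Pt) (pt 0 0) (pt 1 0) = Real.pi / 3 := by
  rw [EuclideanGeometry.angle_comm]; exact hBAC

lemma hCBA : ∠ (pt (1/2) (Real.sqrt 3 / 2) : Pt) (pt 1 0) (pt 0 0) = Real.pi / 3 := by
  rw [EuclideanGeometry.angle_comm]; exact hABC

lemma hBCA : ∠ (pt 1 0 : Pt) (pt (1/2) (Real.sqrt 3 / 2)) (pt 0 0) = Real.pi / 3 := by
  rw [EuclideanGeometry.angle_comm]; exact hACB

theorem stmt1 :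
    (∀ P : Set Pt, ¬ Collinear ℝ P →
      (∀ x ∈ P, ∀ y ∈ P, ∀ z ∈ P, x ≠ y → y ≠ z → x ≠ z → ∠ x y z = Real.pi / 3) →
      P.ncard ≤ 3) ∧
    (∃ P : Set Pt, ¬ Collinear ℝ P ∧
      (∀ x ∈ P, ∀ y ∈ P, ∀ z ∈ P, x ≠ y → y ≠ z → x ≠ z → ∠ x y z = Real.pi / 3) ∧
      P.ncard = 3) := by
  constructor
  · intro P _ hang
    by_contra hcard
    push_neg at hcard
    have hfin : P.Finite := by
      by_contra hinf
      rw [Set.Infinite.ncard hinf] at hcard; omega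
    obtain ⟨a, ha⟩ := Set.nonempty_of_ncard_ne_zero (s := P) (by omega)
    have h2 : (P \ {a}).ncard = P.ncard - 1 := Set.ncard_diff_singleton_of_mem ha
    obtain ⟨b, hb⟩ := Set.nonempty_of_ncard_ne_zero (s := P \ {a}) (by omega)
    have h3 : ((P \ {a}) \ {b}).ncard = (P \ {a}).ncard - 1 :=
      Set.ncard_diff_singleton_of_mem hb
    obtain ⟨c, hc⟩ := Set.nonempty_of_ncard_ne_zero (s := (P \ {a}) \ {b}) (by omega)
    have h4 : (((P \ {a}) \ {b}) \ {c}).ncard = ((P \ {a}) \ {b}).ncard - 1 :=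
      Set.ncard_diff_singleton_of_mem hc
    obtain ⟨d, hd⟩ := Set.nonempty_of_ncard_ne_zero (s := ((P \ {a}) \ {b}) \ {c}) (by omega)
    have hbP : b ∈ P := hb.1
    have hcP : c ∈ P := hc.1.1
    have hdP : d ∈ P := hd.1.1.1
    have hba : b ≠ a := hb.2
    have hca : c ≠ a := hc.1.2
    have hcb : c ≠ b := hc.2
    have hda : d ≠ a := hd.1.1.2
    have hdb : d ≠ b := hd.1.2
    have hdc : d ≠ c := hd.2
    refine no_three_rays (b - a) (c - a) (d - a) (sub_ne_zero.2 hba) (sub_ne_zero.2 hca)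
      (sub_ne_zero.2 hda) ?_ ?_ ?_
    · exact hang b hbP a ha c hcP hba (Ne.symm hca) (Ne.symm hcb)
    · exact hang b hbP a ha d hdP hba (Ne.symm hda) (Ne.symm hdb)
    · exact hang c hcP a ha d hdP hca (Ne.symm hda) (Ne.symm hdc)
  · refine ⟨{pt 0 0, pt 1 0, pt (1/2) (Real.sqrt 3 / 2)}, ?_, ?_, ?_⟩
    · intro hcol
      rcases EuclideanGeometry.collinear_iff_eq_or_eq_or_angle_eq_zero_or_angle_eq_pi.1 hcol with
        h | h | h | h
      · exact hAB h
      · exact hBC h.symm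
      · rw [hABC] at h; linarith [Real.pi_pos]
      · rw [hABC] at h; linarith [Real.pi_pos]
    · intro x hx y hy z hz hxy hyz hxz
      simp only [Set.mem_insert_iff, Set.mem_singleton_iff] at hx hy hz
      rcases hx with rfl | rfl | rfl <;> rcases hy with rfl | rfl | rfl <;>
        rcases hz with rfl | rfl | rfl <;>
        first
          | exact absurd rfl hxy
          | exact absurd rfl hyz
          | exact absurd rfl hxz
          | exact hABC
          | exact hACB
          | exact hBAC
          | exact hBCA
          | exact hCAB
          | exact hCBA
    · exact Set.ncard_eq_three.2 ⟨_, _, _, hAB, hAC, hBC, rfl⟩
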